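/- Taylor-type inclusion for intervals, first order case: let f̂: ℝ → I(ℝ), f̂ = [f̲, f̅], with f̲, f̅ continuously differentiable on [a, x] (a < x). Then f̂(x) ⊖_gH f̂(a) ⊆ ⋃_{θ ∈ [0,1]} (x − a)·f̂'(a + θ(x − a)), where f̂'(t) = [min{f̲'(t), f̅'(t)}, max{f̲'(t), f̅'(t)}]. -/

import Mathlib

/-- First order Taylor-type inclusion: if `f̲`, `f̅` are continuously differentiable on
`[a,b]` (`a < b`), then `f̂(b) ⊖_gH f̂(a) ⊆ ⋃_{θ∈[0,1]} (b−a)·f̂'(a+θ(b−a))`, where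
`f̂'(t) = [min{f̲'(t), f̅'(t)}, max{f̲'(t), f̅'(t)}]`. -/
theorem taylor_inclusion_first_order
    (flo fhi flo' fhi' : ℝ → ℝ) (hle : ∀ t, flo t ≤ fhi t) (a b : ℝ) (hab : a < b)
    (hdlo : ∀ t ∈ Set.Icc a b, HasDerivAt flo (flo' t) t)
    (hdhi : ∀ t ∈ Set.Icc a b, HasDerivAt fhi (fhi' t) t)
    (hclo : ContinuousOn flo' (Set.Icc a b)) (hchi : ContinuousOn fhi' (Set.Icc a b)) :
    Set.Icc (min (flo b - flo a) (fhi b - fhi a)) (max (flo b - flo a) (fhi b - fhi a)) ⊆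
      ⋃ θ ∈ Set.Icc (0:ℝ) 1,
        (fun y => (b - a) * y) ''
          Set.Icc (min (flo' (a + θ * (b - a))) (fhi' (a + θ * (b - a))))
                  (max (flo' (a + θ * (b - a))) (fhi' (a + θ * (b - a)))) := by
  intro y hy
  have hba : (0:ℝ) < b - a := sub_pos.2 hab
  set z := y / (b - a) with hzdef
  -- MVT for flo
  obtain ⟨c₁, hc₁, hc₁e⟩ := exists_hasDerivAt_eq_slope flo flo' hab
    (fun t ht => (hdlo t ht).continuousAt.continuousWithinAt)
    (fun t ht => hdlo t (Set.mem_Icc_of_Ioo ht))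
  obtain ⟨c₂, hc₂, hc₂e⟩ := exists_hasDerivAt_eq_slope fhi fhi' hab
    (fun t ht => (hdhi t ht).continuousAt.continuousWithinAt)
    (fun t ht => hdhi t (Set.mem_Icc_of_Ioo ht))
  have hc₁m : c₁ ∈ Set.Icc a b := Set.mem_Icc_of_Ioo hc₁
  have hc₂m : c₂ ∈ Set.Icc a b := Set.mem_Icc_of_Ioo hc₂
  -- z lies between flo' c₁ and fhi' c₂
  have hz1 : min (flo' c₁) (fhi' c₂) ≤ z := by
    rw [hc₁e, hc₂e, hzdef, min_div_div_right hba.le]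
    exact div_le_div_of_nonneg_right hy.1 hba.le
  have hz2 : z ≤ max (flo' c₁) (fhi' c₂) := by
    rw [hc₁e, hc₂e, hzdef, max_div_div_right hba.le]
    exact div_le_div_of_nonneg_right hy.2 hba.le
  -- find t ∈ [a,b] with min(flo' t, fhi' t) ≤ z ≤ max(flo' t, fhi' t)
  have key : ∃ t ∈ Set.Icc a b,
      min (flo' t) (fhi' t) ≤ z ∧ z ≤ max (flo' t) (fhi' t) := by
    rcases le_total (flo' c₁) (fhi' c₂) with h | h
    · -- flo' c₁ ≤ z ≤ fhi' c₂
      have hz1' : flo' c₁ ≤ z := (min_eq_left h ▸ hz1)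
      have hz2' : z ≤ fhi' c₂ := (max_eq_right h ▸ hz2)
      rcases le_or_gt (flo' c₂) z with h2 | h2
      · exact ⟨c₂, hc₂m, min_le_of_left_le h2, le_max_of_le_right hz2'⟩
      · -- IVT on flo' between c₁ and c₂
        have hcont : ContinuousOn flo' (Set.uIcc c₁ c₂) :=
          hclo.mono (Set.uIcc_subset_Icc hc₁m hc₂m)
        have : z ∈ flo' '' Set.uIcc c₁ c₂ :=
          intermediate_value_uIcc hcont (Set.mem_uIcc.2 (Or.inl ⟨hz1', h2.le⟩))
        obtain ⟨t, ht, hteq⟩ := this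
        exact ⟨t, Set.uIcc_subset_Icc hc₁m hc₂m ht,
          hteq ▸ min_le_of_left_le le_rfl, hteq ▸ le_max_of_le_left le_rfl⟩
    · -- fhi' c₂ ≤ z ≤ flo' c₁
      have hz1' : fhi' c₂ ≤ z := (min_eq_right h ▸ hz1)
      have hz2' : z ≤ flo' c₁ := (max_eq_left h ▸ hz2)
      rcases le_or_gt (fhi' c₁) z with h2 | h2
      · exact ⟨c₁, hc₁m, min_le_of_right_le h2, le_max_of_le_left hz2'⟩
      · have hcont : ContinuousOn fhi' (Set.uIcc c₂ c₁) :=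
          hchi.mono (Set.uIcc_subset_Icc hc₂m hc₁m)
        have : z ∈ fhi' '' Set.uIcc c₂ c₁ :=
          intermediate_value_uIcc hcont (Set.mem_uIcc.2 (Or.inl ⟨hz1', h2.le⟩))
        obtain ⟨t, ht, hteq⟩ := this
        exact ⟨t, Set.uIcc_subset_Icc hc₂m hc₁m ht,
          hteq ▸ min_le_of_right_le le_rfl, hteq ▸ le_max_of_le_right le_rfl⟩
  obtain ⟨t, ht, hzt1, hzt2⟩ := key
  refine Set.mem_iUnion₂.2 ⟨(t - a) / (b - a), ⟨?_, ?_⟩, ?_⟩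
  · exact div_nonneg (sub_nonneg.2 ht.1) hba.le
  · exact (div_le_one hba).2 (sub_le_sub_right ht.2 a)
  · have hteq : a + (t - a) / (b - a) * (b - a) = t := by field_simp; ring
    rw [hteq]
    exact ⟨z, ⟨hzt1, hzt2⟩, by rw [hzdef]; field_simp⟩
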